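/- Fix a natural number k ≥ 1 and a real number ε with 0 ≤ ε < 1. For n ≥ k define E[N_n] = ∑_{r=k}^{n} ∑_{e=0}^{∞} min(r+e, n) · C(r+e−1, e) ε^e (1−ε)^r · P_{M_n}(r), where P_{M_n}(r) = 2^{k−r} ∏_{l=0}^{n−r−1} (1 − 2^{l−(n−k)}). Then lim_{n→∞} E[N_n] = (k + c₀)/(1 − ε), where c₀ = ∑_{i=1}^{∞} 1/(2^i − 1). -/

import Mathlib

open Filter Finset

/-- The Erdős–Borwein constant `c₀ = ∑_{i=1}^{∞} 1/(2^i − 1)`. -/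
noncomputable def c₀ : ℝ := ∑' i : ℕ, 1 / ((2 : ℝ) ^ (i + 1) - 1)

/-- `P_{M_n}(r) = 2^{k−r} ∏_{l=0}^{n−r−1} (1 − 2^{l−(n−k)})`: the probability that
exactly `r` received symbols are needed to decode a random binary linear `(n,k)` code. -/
noncomputable def PM (k n r : ℕ) : ℝ :=
  (2 : ℝ) ^ ((k : ℤ) - (r : ℤ)) *
    ∏ l ∈ Finset.range (n - r), (1 - (2 : ℝ) ^ ((l : ℤ) - ((n : ℤ) - (k : ℤ))))

/-- finite product `∏_{s<m} (1 - 2^{-(t+s+1)})` -/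
noncomputable def hh (m t : ℕ) : ℝ := ∏ s ∈ Finset.range m, (1 - ((2:ℝ)^(t+s+1))⁻¹)

lemma inv2 (j : ℕ) : ((2:ℝ)^j)⁻¹ = (1/2)^j := by
  rw [one_div, inv_pow]

lemma factor_nonneg (j : ℕ) : (0:ℝ) ≤ 1 - ((2:ℝ)^(j+1))⁻¹ := by
  have h1 : ((2:ℝ)^(j+1))⁻¹ ≤ 1 := by
    rw [inv_le_one₀ (by positivity)]
    exact one_le_pow₀ (by norm_num)
  linarith

lemma factor_le_one (j : ℕ) : 1 - ((2:ℝ)^(j+1))⁻¹ ≤ 1 := by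
  have : (0:ℝ) ≤ ((2:ℝ)^(j+1))⁻¹ := by positivity
  linarith

lemma hh_nonneg (m t : ℕ) : 0 ≤ hh m t :=
  Finset.prod_nonneg fun s _ => factor_nonneg (t+s)

lemma hh_le_one (m t : ℕ) : hh m t ≤ 1 :=
  Finset.prod_le_one (fun s _ => factor_nonneg (t+s)) (fun s _ => factor_le_one (t+s))

lemma hh_succ_left (m t : ℕ) : hh (m+1) t = hh m t * (1 - ((2:ℝ)^(t+m+1))⁻¹) := by
  rw [hh, hh, Finset.prod_range_succ]

lemma hh_succ_right (m t : ℕ) : hh (m+1) t = (1 - ((2:ℝ)^(t+1))⁻¹) * hh m (t+1) := by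
  rw [hh, hh, Finset.prod_range_succ', mul_comm]
  congr 1
  apply Finset.prod_congr rfl
  intro s _
  have h : t+(s+1)+1 = t+1+s+1 := by omega
  rw [h]

lemma one_sub_hh_le (m t : ℕ) : 1 - hh m t ≤ ((2:ℝ)^t)⁻¹ * (1 - ((2:ℝ)^m)⁻¹) := by
  induction m with
  | zero => simp [hh]
  | succ m ih =>
      have h1 : hh (m+1) t = hh m t * (1 - ((2:ℝ)^(t+m+1))⁻¹) := hh_succ_left m t
      have h2 : hh m t ≤ 1 := hh_le_one m t
      have h3 : 0 ≤ hh m t := hh_nonneg m t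
      have h4 : ((2:ℝ)^(t+m+1))⁻¹ = ((2:ℝ)^t)⁻¹ * ((2:ℝ)^(m+1))⁻¹ := by
        rw [← mul_inv, ← pow_add]; ring_nf
      have h5 : hh m t * ((2:ℝ)^(t+m+1))⁻¹ ≤ ((2:ℝ)^t)⁻¹ * ((2:ℝ)^(m+1))⁻¹ := by
        rw [h4]
        nlinarith [mul_pos (show (0:ℝ) < ((2:ℝ)^t)⁻¹ by positivity)
          (show (0:ℝ) < ((2:ℝ)^(m+1))⁻¹ by positivity)]
      have h6 : 1 - hh (m+1) t = (1 - hh m t) + hh m t * ((2:ℝ)^(t+m+1))⁻¹ := by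
        rw [h1]; ring
      rw [h6]
      have h7 : ((2:ℝ)^(m+1))⁻¹ = ((2:ℝ)^m)⁻¹ / 2 := by
        rw [pow_succ, mul_inv]; ring
      have hpos : (0:ℝ) < ((2:ℝ)^t)⁻¹ := by positivity
      have hm : (0:ℝ) < ((2:ℝ)^(m+1))⁻¹ := by positivity
      nlinarith

lemma one_sub_hh_le' (m t : ℕ) : 1 - hh m t ≤ (1/2:ℝ)^t := by
  have := one_sub_hh_le m t
  have h1 : (0:ℝ) ≤ ((2:ℝ)^m)⁻¹ := by positivity
  have h2 : (0:ℝ) < ((2:ℝ)^t)⁻¹ := by positivity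
  rw [← inv2]
  nlinarith

lemma hh_anti (t : ℕ) : Antitone (fun m => hh m t) := by
  apply antitone_nat_of_succ_le
  intro m
  rw [hh_succ_left]
  have := hh_nonneg m t
  nlinarith [factor_nonneg (t+m), factor_le_one (t+m)]

/-- infinite product `∏_{s>t}(1-2^{-s})` -/
noncomputable def pinf (t : ℕ) : ℝ := ⨅ m, hh m t

lemma tendsto_hh (t : ℕ) : Tendsto (fun m => hh m t) atTop (nhds (pinf t)) := by
  apply tendsto_atTop_ciInf (hh_anti t)
  exact ⟨0, by rintro x ⟨m, rfl⟩; exact hh_nonneg m t⟩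

lemma pinf_nonneg (t : ℕ) : 0 ≤ pinf t :=
  ge_of_tendsto' (tendsto_hh t) (fun m => hh_nonneg m t)


lemma pinf_le_hh (m t : ℕ) : pinf t ≤ hh m t :=
  ciInf_le ⟨0, by rintro x ⟨m', rfl⟩; exact hh_nonneg m' t⟩ m

lemma pinf_le_one (t : ℕ) : pinf t ≤ 1 := (pinf_le_hh 0 t).trans (hh_le_one 0 t)

lemma one_sub_pinf_le (t : ℕ) : 1 - pinf t ≤ (1/2:ℝ)^t := by
  have h : Tendsto (fun m => 1 - hh m t) atTop (nhds (1 - pinf t)) :=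
    tendsto_const_nhds.sub (tendsto_hh t)
  exact le_of_tendsto' h (fun m => one_sub_hh_le' m t)

lemma pinf_succ (t : ℕ) : pinf t = (1 - ((2:ℝ)^(t+1))⁻¹) * pinf (t+1) := by
  have h1 : Tendsto (fun m => hh (m+1) t) atTop (nhds (pinf t)) :=
    (tendsto_hh t).comp (tendsto_add_atTop_nat 1)
  have h2 : Tendsto (fun m => (1 - ((2:ℝ)^(t+1))⁻¹) * hh m (t+1)) atTop
      (nhds ((1 - ((2:ℝ)^(t+1))⁻¹) * pinf (t+1))) :=
    tendsto_const_nhds.mul (tendsto_hh (t+1))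
  refine tendsto_nhds_unique h1 (h2.congr fun m => ?_)
  exact (hh_succ_right m t).symm

lemma pinf_tendsto_one : Tendsto pinf atTop (nhds 1) := by
  have h0 : Tendsto (fun t : ℕ => 1 - (1/2:ℝ)^t) atTop (nhds (1 - 0)) :=
    tendsto_const_nhds.sub (tendsto_pow_atTop_nhds_zero_of_lt_one (by norm_num) (by norm_num))
  rw [sub_zero] at h0
  apply tendsto_of_tendsto_of_tendsto_of_le_of_le h0 tendsto_const_nhds
  · intro t; have := one_sub_pinf_le t; linarith
  · intro t; exact pinf_le_one t

lemma summable_geo_bdd {c : ℝ} (hc0 : 0 ≤ c) (hc1 : c < 1) {f : ℕ → ℝ}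
    (h0 : ∀ t, 0 ≤ f t) (h1 : ∀ t, f t ≤ 1) : Summable fun t => c^t * f t := by
  apply Summable.of_nonneg_of_le (fun t => mul_nonneg (pow_nonneg hc0 t) (h0 t))
    (fun t => mul_le_of_le_one_right (pow_nonneg hc0 t) (h1 t))
  exact summable_geometric_of_lt_one hc0 hc1

noncomputable def g1 (m : ℕ) : ℝ := ∑' t, (1/2:ℝ)^t * hh m t
noncomputable def g2 (m : ℕ) : ℝ := ∑' t, (1/4:ℝ)^t * hh m t

lemma sum_g1 (m : ℕ) : Summable fun t => (1/2:ℝ)^t * hh m t :=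
  summable_geo_bdd (by norm_num) (by norm_num) (fun t => hh_nonneg m t) (fun t => hh_le_one m t)

lemma sum_g2 (m : ℕ) : Summable fun t => (1/4:ℝ)^t * hh m t :=
  summable_geo_bdd (by norm_num) (by norm_num) (fun t => hh_nonneg m t) (fun t => hh_le_one m t)

lemma sum_g1' (m : ℕ) : Summable fun t => (1/2:ℝ)^t * hh m (t+1) :=
  summable_geo_bdd (by norm_num) (by norm_num) (fun t => hh_nonneg m (t+1))
    (fun t => hh_le_one m (t+1))

lemma sum_g2' (m : ℕ) : Summable fun t => (1/4:ℝ)^t * hh m (t+1) :=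
  summable_geo_bdd (by norm_num) (by norm_num) (fun t => hh_nonneg m (t+1))
    (fun t => hh_le_one m (t+1))

lemma R1 (m : ℕ) : g1 (m+1) = g1 m - (1/2:ℝ)^(m+1) * g2 m := by
  have key : ∀ t : ℕ, (1/2:ℝ)^t * hh (m+1) t
      = (1/2:ℝ)^t * hh m t - (1/2:ℝ)^(m+1) * ((1/4:ℝ)^t * hh m t) := by
    intro t
    rw [hh_succ_left]
    have h4 : ((2:ℝ)^(t+m+1))⁻¹ = (1/2)^t * (1/2)^(m+1) := by
      rw [inv2, ← pow_add, add_assoc]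
    rw [h4]
    have : ((1/4:ℝ))^t = (1/2)^t * (1/2)^t := by
      rw [← mul_pow]; norm_num
    rw [this]; ring
  calc g1 (m+1) = ∑' t, ((1/2:ℝ)^t * hh m t - (1/2:ℝ)^(m+1) * ((1/4:ℝ)^t * hh m t)) := by
        rw [g1]; exact tsum_congr key
    _ = g1 m - (1/2:ℝ)^(m+1) * g2 m := by
        rw [Summable.tsum_sub (sum_g1 m) ((sum_g2 m).mul_left _), tsum_mul_left, g1, g2]

lemma R2 (m : ℕ) : g1 (m+1) = 2 * g1 m - 2 * g2 m := by
  have key : ∀ t : ℕ, (1/2:ℝ)^t * hh (m+1) t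
      = (1/2:ℝ)^t * hh m (t+1) - (1/2:ℝ) * ((1/4:ℝ)^t * hh m (t+1)) := by
    intro t
    rw [hh_succ_right]
    have h4 : ((2:ℝ)^(t+1))⁻¹ = (1/2)^(t+1) := inv2 (t+1)
    rw [h4]
    have : ((1/4:ℝ))^t = (1/2)^t * (1/2)^t := by rw [← mul_pow]; norm_num
    rw [this, pow_succ]; ring
  have e1 : ∑' t, (1/2:ℝ)^t * hh m (t+1) = 2 * (g1 m - hh m 0) := by
    have h := Summable.tsum_eq_zero_add (sum_g1 m)
    simp only [pow_zero, one_mul] at h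
    have h2 : ∑' t, (1/2:ℝ)^(t+1) * hh m (t+1) = g1 m - hh m 0 := by
      rw [g1, h]; ring
    calc ∑' t, (1/2:ℝ)^t * hh m (t+1) = ∑' t, 2 * ((1/2:ℝ)^(t+1) * hh m (t+1)) := by
          apply tsum_congr; intro t; rw [pow_succ]; ring
      _ = 2 * (g1 m - hh m 0) := by rw [tsum_mul_left, h2]
  have e2 : ∑' t, (1/4:ℝ)^t * hh m (t+1) = 4 * (g2 m - hh m 0) := by
    have h := Summable.tsum_eq_zero_add (sum_g2 m)
    simp only [pow_zero, one_mul] at h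
    have h2 : ∑' t, (1/4:ℝ)^(t+1) * hh m (t+1) = g2 m - hh m 0 := by
      rw [g2, h]; ring
    calc ∑' t, (1/4:ℝ)^t * hh m (t+1) = ∑' t, 4 * ((1/4:ℝ)^(t+1) * hh m (t+1)) := by
          apply tsum_congr; intro t; rw [pow_succ]; ring
      _ = 4 * (g2 m - hh m 0) := by rw [tsum_mul_left, h2]
  calc g1 (m+1) = ∑' t, ((1/2:ℝ)^t * hh m (t+1) - (1/2:ℝ) * ((1/4:ℝ)^t * hh m (t+1))) := by
        rw [g1]; exact tsum_congr key
    _ = (∑' t, (1/2:ℝ)^t * hh m (t+1)) - (1/2:ℝ) * ∑' t, (1/4:ℝ)^t * hh m (t+1) := by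
        rw [Summable.tsum_sub (sum_g1' m) ((sum_g2' m).mul_left _), tsum_mul_left]
    _ = 2 * g1 m - 2 * g2 m := by rw [e1, e2]; ring

lemma g1_eq (m : ℕ) : g1 m = (1 - (1/2:ℝ)^(m+1))⁻¹ := by
  induction m with
  | zero =>
      have h : ∀ t : ℕ, (1/2:ℝ)^t * hh 0 t = (1/2:ℝ)^t := by
        intro t; rw [hh]; simp
      rw [g1, tsum_congr h, tsum_geometric_of_lt_one (by norm_num) (by norm_num)]
      norm_num
  | succ m ih =>
      have r1 := R1 m
      have r2 := R2 m
      have hne : (1 - (1/2:ℝ)^(m+1)) ≠ 0 := by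
        have : (1/2:ℝ)^(m+1) < 1 := pow_lt_one₀ (by norm_num) (by norm_num) (by omega)
        linarith
      have hne2 : (1 - (1/2:ℝ)^(m+2)) ≠ 0 := by
        have : (1/2:ℝ)^(m+2) < 1 := pow_lt_one₀ (by norm_num) (by norm_num) (by omega)
        linarith
      -- eliminate g2 : from r2, g2 m = g1 m - g1 (m+1)/2
      have hg2 : g2 m = g1 m - g1 (m+1) / 2 := by linarith
      rw [hg2] at r1
      -- r1 : g1 (m+1) = g1 m - (1/2)^(m+1) * (g1 m - g1 (m+1)/2)
      have key : g1 (m+1) * (1 - (1/2:ℝ)^(m+2)) = g1 m * (1 - (1/2:ℝ)^(m+1)) := by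
        have hp : (1/2:ℝ)^(m+2) = (1/2:ℝ)^(m+1) * (1/2) := by rw [pow_succ]
        rw [hp]; linarith [r1]
      rw [ih, inv_mul_cancel₀ hne] at key
      exact eq_inv_of_mul_eq_one_left (by linarith [key])

noncomputable def sho (m : ℕ) : ℝ := ∑' t, (1 - hh m t)

lemma sum_sho (m : ℕ) : Summable fun t => 1 - hh m t := by
  apply Summable.of_nonneg_of_le (fun t => by linarith [hh_le_one m t])
    (fun t => one_sub_hh_le' m t)
  exact summable_geometric_of_lt_one (by norm_num) (by norm_num)

lemma sho_succ (m : ℕ) : sho (m+1) = sho m + 1/((2:ℝ)^(m+1) - 1) := by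
  have key : ∀ t : ℕ, 1 - hh (m+1) t
      = (1 - hh m t) + (1/2:ℝ)^(m+1) * ((1/2:ℝ)^t * hh m t) := by
    intro t
    rw [hh_succ_left]
    have h4 : ((2:ℝ)^(t+m+1))⁻¹ = (1/2)^t * (1/2)^(m+1) := by
      rw [inv2, ← pow_add, add_assoc]
    have : hh m t * (1 - ((2:ℝ)^(t+m+1))⁻¹) = hh m t - hh m t * ((2:ℝ)^(t+m+1))⁻¹ := by ring
    rw [this, h4]; ring
  have e : sho (m+1) = sho m + (1/2:ℝ)^(m+1) * g1 m := by
    calc sho (m+1) = ∑' t, ((1 - hh m t) + (1/2:ℝ)^(m+1) * ((1/2:ℝ)^t * hh m t)) := by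
          rw [sho]; exact tsum_congr key
      _ = sho m + (1/2:ℝ)^(m+1) * g1 m := by
          rw [Summable.tsum_add (sum_sho m) ((sum_g1 m).mul_left _), tsum_mul_left, sho, g1]
  rw [e, g1_eq]
  congr 1
  have h1 : (0:ℝ) < (2:ℝ)^(m+1) := by positivity
  have h2 : (1:ℝ) < (2:ℝ)^(m+1) := one_lt_pow₀ (by norm_num) (by omega)
  have h3 : (1/2:ℝ)^(m+1) = ((2:ℝ)^(m+1))⁻¹ := (inv2 (m+1)).symm
  rw [h3]
  rw [eq_div_iff (by linarith : (2:ℝ)^(m+1) - 1 ≠ 0)]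
  field_simp
  exact div_self (by linarith)

lemma sho_eq (m : ℕ) : sho m = ∑ i ∈ Finset.range m, 1/((2:ℝ)^(i+1) - 1) := by
  induction m with
  | zero => simp [sho, hh]
  | succ m ih => rw [sho_succ, ih, Finset.sum_range_succ]

lemma c0_aux (i : ℕ) : (2:ℝ)^i ≤ (2:ℝ)^(i+1) - 1 := by
  have h3 : (1:ℝ) ≤ (2:ℝ)^i := one_le_pow₀ (by norm_num)
  have : (2:ℝ)^(i+1) = 2 * 2^i := by rw [pow_succ]; ring
  linarith

lemma summable_c0 : Summable (fun i : ℕ => 1/((2:ℝ)^(i+1) - 1)) := by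
  refine Summable.of_nonneg_of_le (fun i => ?_) (fun i => ?_)
    (summable_geometric_of_lt_one (by norm_num) (by norm_num : (1/2:ℝ) < 1))
  · have h4 : (0:ℝ) < (2:ℝ)^i := by positivity
    apply div_nonneg one_pos.le
    linarith [c0_aux i]
  · have h4 : (0:ℝ) < (2:ℝ)^i := by positivity
    calc 1/((2:ℝ)^(i+1) - 1) ≤ 1/(2:ℝ)^i := one_div_le_one_div_of_le h4 (c0_aux i)
      _ = (1/2:ℝ)^i := by rw [div_pow, one_pow]

lemma summable_one_sub_pinf : Summable fun t => 1 - pinf t := by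
  refine Summable.of_nonneg_of_le (fun t => by linarith [pinf_le_one t])
    (fun t => one_sub_pinf_le t)
    (summable_geometric_of_lt_one (by norm_num) (by norm_num))

lemma tsum_one_sub_pinf : ∑' t, (1 - pinf t) = ∑' i : ℕ, 1/((2:ℝ)^(i+1) - 1) := by
  have hdct : Tendsto sho atTop (nhds (∑' t, (1 - pinf t))) := by
    apply tendsto_tsum_of_dominated_convergence
      (bound := fun t => (1/2:ℝ)^t)
      (summable_geometric_of_lt_one (by norm_num) (by norm_num))
    · intro t
      exact tendsto_const_nhds.sub (tendsto_hh t)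
    · filter_upwards with m t
      rw [Real.norm_eq_abs, abs_of_nonneg (by linarith [hh_le_one m t])]
      exact one_sub_hh_le' m t
  have hps : Tendsto sho atTop (nhds (∑' i : ℕ, 1/((2:ℝ)^(i+1) - 1))) := by
    have := summable_c0.hasSum.tendsto_sum_nat
    apply this.congr
    intro m
    exact (sho_eq m).symm
  exact tendsto_nhds_unique hdct hps

lemma partialA (n : ℕ) : ∑ t ∈ Finset.range (n+1), (1/2:ℝ)^t * pinf t = pinf n := by
  induction n with
  | zero => simp
  | succ n ih =>
      rw [Finset.sum_range_succ, ih]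
      have h := pinf_succ n
      rw [inv2 (n+1)] at h
      rw [h]; ring

lemma summableA : Summable fun t => (1/2:ℝ)^t * pinf t :=
  summable_geo_bdd (by norm_num) (by norm_num) pinf_nonneg pinf_le_one

lemma hasSumA : HasSum (fun t => (1/2:ℝ)^t * pinf t) 1 := by
  have h1 : Tendsto (fun n => ∑ t ∈ Finset.range (n+1), (1/2:ℝ)^t * pinf t) atTop
      (nhds (∑' t, (1/2:ℝ)^t * pinf t)) :=
    summableA.hasSum.tendsto_sum_nat.comp (tendsto_add_atTop_nat 1)
  have h2 : Tendsto (fun n => ∑ t ∈ Finset.range (n+1), (1/2:ℝ)^t * pinf t) atTop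
      (nhds 1) := by
    apply pinf_tendsto_one.congr
    intro n
    exact (partialA n).symm
  have h3 := summableA.hasSum
  rwa [tendsto_nhds_unique h1 h2] at h3

lemma summableB : Summable fun t : ℕ => (t:ℝ) * ((1/2:ℝ)^t * pinf t) := by
  have hg : Summable (fun t : ℕ => (t:ℝ) * (1/2:ℝ)^t) := by
    have := summable_pow_mul_geometric_of_norm_lt_one (R := ℝ) 1
      (show ‖(1/2:ℝ)‖ < 1 by rw [Real.norm_eq_abs, abs_lt]; constructor <;> norm_num)
    simpa using this
  refine Summable.of_nonneg_of_le (f := fun t : ℕ => (t:ℝ) * (1/2:ℝ)^t)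
    (fun t => ?_) (fun t => ?_) hg
  · exact mul_nonneg (Nat.cast_nonneg t) (mul_nonneg (by positivity) (pinf_nonneg t))
  · show (t:ℝ) * ((1/2:ℝ)^t * pinf t) ≤ (t:ℝ) * (1/2:ℝ)^t
    have h1 := pinf_le_one t
    have h2 : (0:ℝ) ≤ (1/2:ℝ)^t := by positivity
    have h3 : (0:ℝ) ≤ (t:ℝ) := Nat.cast_nonneg t
    calc (t:ℝ) * ((1/2:ℝ)^t * pinf t) = ((t:ℝ)*(1/2:ℝ)^t) * pinf t := by ring
      _ ≤ (t:ℝ)*(1/2:ℝ)^t := mul_le_of_le_one_right (mul_nonneg h3 h2) h1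

lemma partialB (n : ℕ) : ∑ t ∈ Finset.range (n+1), (t:ℝ) * ((1/2:ℝ)^t * pinf t)
    = (∑ t ∈ Finset.range (n+1), (1 - pinf t)) - (n+1) * (1 - pinf n) := by
  induction n with
  | zero => simp
  | succ n ih =>
      rw [Finset.sum_range_succ, ih,
        Finset.sum_range_succ (f := fun t => 1 - pinf t) (n := n+1)]
      have h := pinf_succ n
      rw [inv2 (n+1)] at h
      rw [h]
      push_cast
      ring

lemma hasSumB : HasSum (fun t : ℕ => (t:ℝ) * ((1/2:ℝ)^t * pinf t))
    (∑' i : ℕ, 1/((2:ℝ)^(i+1) - 1)) := by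
  have h1 : Tendsto (fun n => ∑ t ∈ Finset.range (n+1), (t:ℝ) * ((1/2:ℝ)^t * pinf t)) atTop
      (nhds (∑' t : ℕ, (t:ℝ) * ((1/2:ℝ)^t * pinf t))) :=
    summableB.hasSum.tendsto_sum_nat.comp (tendsto_add_atTop_nat 1)
  have hz : Tendsto (fun n : ℕ => ((n:ℝ)+1) * (1 - pinf n)) atTop (nhds 0) := by
    have hsum : Summable (fun n : ℕ => ((n:ℝ)+1) * (1/2:ℝ)^n) := by
      have hg : Summable (fun t : ℕ => (t:ℝ) * (1/2:ℝ)^t) := by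
        have := summable_pow_mul_geometric_of_norm_lt_one (R := ℝ) 1
          (show ‖(1/2:ℝ)‖ < 1 by rw [Real.norm_eq_abs, abs_lt]; constructor <;> norm_num)
        simpa using this
      have := hg.add (summable_geometric_of_lt_one (by norm_num) (by norm_num : (1/2:ℝ) < 1))
      simpa [add_mul] using this
    have hto := hsum.tendsto_atTop_zero
    apply squeeze_zero (fun n => ?_) (fun n => ?_) hto
    · have := one_sub_pinf_le n
      have := pinf_le_one n
      have h3 : (0:ℝ) ≤ (n:ℝ) + 1 := by positivity
      nlinarith
    · have h4 := one_sub_pinf_le n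
      have h3 : (0:ℝ) ≤ (n:ℝ) + 1 := by positivity
      have h5 : (0:ℝ) ≤ 1 - pinf n := by linarith [pinf_le_one n]
      nlinarith
  have h2 : Tendsto (fun n => ∑ t ∈ Finset.range (n+1), (t:ℝ) * ((1/2:ℝ)^t * pinf t)) atTop
      (nhds (∑' i : ℕ, 1/((2:ℝ)^(i+1) - 1))) := by
    have hs : Tendsto (fun n => ∑ t ∈ Finset.range (n+1), (1 - pinf t)) atTop
        (nhds (∑' t, (1 - pinf t))) :=
      summable_one_sub_pinf.hasSum.tendsto_sum_nat.comp (tendsto_add_atTop_nat 1)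
    have := hs.sub hz
    rw [sub_zero, tsum_one_sub_pinf] at this
    apply this.congr
    intro n
    rw [partialB n]
  have h3 := summableB.hasSum
  rwa [tendsto_nhds_unique h1 h2] at h3

lemma PM_eq {k n r : ℕ} (hkr : k ≤ r) (hrn : r ≤ n) :
    PM k n r = (1/2:ℝ)^(r-k) * hh (n-r) (r-k) := by
  rw [PM, hh]
  congr 1
  · have h1 : (k:ℤ) - (r:ℤ) = -((r - k : ℕ) : ℤ) := by
      push_cast [hkr]; ring
    rw [h1, zpow_neg, zpow_natCast, ← inv_pow, one_div]
  · rw [← Finset.prod_range_reflect]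
    apply Finset.prod_congr rfl
    intro l hl
    rw [Finset.mem_range] at hl
    have h2 : (((n - r - 1 - l : ℕ):ℤ) - ((n:ℤ) - (k:ℤ))) = -((r - k + l + 1 : ℕ) : ℤ) := by
      omega
    rw [h2, zpow_neg, zpow_natCast]

lemma PM_nonneg {k n r : ℕ} (hkr : k ≤ r) (hrn : r ≤ n) : 0 ≤ PM k n r := by
  rw [PM_eq hkr hrn]
  exact mul_nonneg (by positivity) (hh_nonneg _ _)

lemma PM_le {k n r : ℕ} (hkr : k ≤ r) (hrn : r ≤ n) : PM k n r ≤ (1/2:ℝ)^(r-k) := by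
  rw [PM_eq hkr hrn]
  exact mul_le_of_le_one_right (by positivity) (hh_le_one _ _)

lemma PM_tendsto {k r : ℕ} (hkr : k ≤ r) :
    Tendsto (fun n => PM k n r) atTop (nhds ((1/2:ℝ)^(r-k) * pinf (r-k))) := by
  have h1 : Tendsto (fun n : ℕ => (1/2:ℝ)^(r-k) * hh (n-r) (r-k)) atTop
      (nhds ((1/2:ℝ)^(r-k) * pinf (r-k))) :=
    (tendsto_const_nhds.mul ((tendsto_hh (r-k)).comp (tendsto_sub_atTop_nat r)))
  apply h1.congr'
  filter_upwards [eventually_ge_atTop r] with n hn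
  exact (PM_eq hkr hn).symm

lemma nat_key (r e : ℕ) (hr : 1 ≤ r) :
    (r + e) * ((r + e - 1).choose e) = r * ((e + r).choose r) := by
  have h := Nat.add_one_mul_choose_eq (r + e - 1) (r - 1)
  have h1 : r + e - 1 + 1 = r + e := by omega
  have h2 : r - 1 + 1 = r := by omega
  rw [h1, h2] at h
  -- h : (r + e) * (r + e - 1).choose (r - 1) = (r + e).choose r * r
  have h3 : (r + e - 1).choose (r - 1) = (r + e - 1).choose e := by
    have h4 : r - 1 = (r + e - 1) - e := by omega
    rw [h4, Nat.choose_symm (by omega)]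
  rw [h3] at h
  rw [h]
  have h5 : (e + r) = (r + e) := by omega
  rw [h5]
  ring

lemma NB2 (ε : ℝ) (h₀ : 0 ≤ ε) (h₁ : ε < 1) (r : ℕ) (hr : 1 ≤ r) :
    HasSum (fun e : ℕ => ((r + e : ℕ) : ℝ) * ((r + e - 1).choose e : ℝ) * ε ^ e * (1 - ε) ^ r)
      ((r : ℝ) / (1 - ε)) := by
  have hε : ‖ε‖ < 1 := by rw [Real.norm_eq_abs, abs_of_nonneg h₀]; exact h₁
  have h1ε : (0:ℝ) < 1 - ε := by linarith
  have H := hasSum_choose_mul_geometric_of_norm_lt_one (𝕜 := ℝ) r hε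
  have H2 := H.mul_left ((r:ℝ) * (1 - ε) ^ r)
  have hval : (r:ℝ) * (1 - ε) ^ r * (1 / (1 - ε) ^ (r + 1)) = (r : ℝ) / (1 - ε) := by
    rw [pow_succ]
    field_simp
  rw [hval] at H2
  have heq : (fun e : ℕ => ((r + e : ℕ) : ℝ) * ((r + e - 1).choose e : ℝ) * ε ^ e * (1 - ε) ^ r)
      = fun e : ℕ => (r:ℝ) * (1 - ε) ^ r * (((e + r).choose r : ℝ) * ε ^ e) := by
    funext e
    have hc : ((r + e : ℕ) : ℝ) * ((r + e - 1).choose e : ℝ) = (r:ℝ) * ((e + r).choose r : ℝ) := by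
      exact_mod_cast congrArg (Nat.cast (R := ℝ)) (nat_key r e hr)
    push_cast at hc ⊢
    linear_combination (ε^e * (1-ε)^r) * hc
  rw [heq]
  exact H2

lemma term_nonneg (ε : ℝ) (h₀ : 0 ≤ ε) (h₁ : ε < 1) (a : ℕ) (b : ℕ) (e r : ℕ) :
    (0:ℝ) ≤ (a : ℝ) * (b : ℝ) * ε ^ e * (1 - ε) ^ r := by
  have : (0:ℝ) ≤ 1 - ε := by linarith
  positivity

lemma term_nonneg' (ε : ℝ) (h₀ : 0 ≤ ε) (h₁ : ε < 1) (n r e : ℕ) :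
    (0:ℝ) ≤ (min (r + e) n : ℝ) * ((r + e - 1).choose e : ℝ) * ε ^ e * (1 - ε) ^ r := by
  have h1 : (0:ℝ) ≤ 1 - ε := by linarith
  have hmin : (0:ℝ) ≤ (min (r + e) n : ℝ) := le_min (by positivity) (by positivity)
  exact mul_nonneg (mul_nonneg (mul_nonneg hmin (Nat.cast_nonneg _)) (pow_nonneg h₀ e))
    (pow_nonneg h1 r)

lemma term_le (ε : ℝ) (h₀ : 0 ≤ ε) (h₁ : ε < 1) (n r e : ℕ) :
    (min (r + e) n : ℝ) * ((r + e - 1).choose e : ℝ) * ε ^ e * (1 - ε) ^ r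
      ≤ ((r + e : ℕ) : ℝ) * ((r + e - 1).choose e : ℝ) * ε ^ e * (1 - ε) ^ r := by
  have h1 : (0:ℝ) ≤ 1 - ε := by linarith
  have hmin : (min (r + e) n : ℝ) ≤ ((r + e : ℕ) : ℝ) := by
    push_cast
    exact min_le_left _ _
  gcongr

lemma inner_summable (ε : ℝ) (h₀ : 0 ≤ ε) (h₁ : ε < 1) (n r : ℕ) (hr : 1 ≤ r) :
    Summable (fun e : ℕ =>
      (min (r + e) n : ℝ) * ((r + e - 1).choose e : ℝ) * ε ^ e * (1 - ε) ^ r) :=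
  Summable.of_nonneg_of_le (fun e => term_nonneg' ε h₀ h₁ n r e)
    (fun e => term_le ε h₀ h₁ n r e) (NB2 ε h₀ h₁ r hr).summable

lemma inner_le (ε : ℝ) (h₀ : 0 ≤ ε) (h₁ : ε < 1) (n r : ℕ) (hr : 1 ≤ r) :
    ∑' e : ℕ, (min (r + e) n : ℝ) * ((r + e - 1).choose e : ℝ) * ε ^ e * (1 - ε) ^ r
      ≤ (r : ℝ) / (1 - ε) := by
  have h := Summable.tsum_le_tsum (fun e => term_le ε h₀ h₁ n r e)
    (inner_summable ε h₀ h₁ n r hr) (NB2 ε h₀ h₁ r hr).summable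
  rw [(NB2 ε h₀ h₁ r hr).tsum_eq] at h
  exact h

lemma inner_nonneg (ε : ℝ) (h₀ : 0 ≤ ε) (h₁ : ε < 1) (n r : ℕ) :
    0 ≤ ∑' e : ℕ, (min (r + e) n : ℝ) * ((r + e - 1).choose e : ℝ) * ε ^ e * (1 - ε) ^ r :=
  tsum_nonneg (fun e => term_nonneg' ε h₀ h₁ n r e)

lemma inner_tendsto (ε : ℝ) (h₀ : 0 ≤ ε) (h₁ : ε < 1) (r : ℕ) (hr : 1 ≤ r) :
    Tendsto (fun n : ℕ =>
        ∑' e : ℕ, (min (r + e) n : ℝ) * ((r + e - 1).choose e : ℝ) * ε ^ e * (1 - ε) ^ r)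
      atTop (nhds ((r : ℝ) / (1 - ε))) := by
  rw [← (NB2 ε h₀ h₁ r hr).tsum_eq]
  apply tendsto_tsum_of_dominated_convergence
    (bound := fun e : ℕ => ((r + e : ℕ) : ℝ) * ((r + e - 1).choose e : ℝ) * ε ^ e * (1 - ε) ^ r)
    (NB2 ε h₀ h₁ r hr).summable
  · intro e
    apply tendsto_const_nhds.congr'
    filter_upwards [eventually_ge_atTop (r + e)] with n hn
    have hc : ((r + e : ℕ) : ℝ) ≤ (n : ℝ) := Nat.cast_le.2 hn
    push_cast at hc ⊢
    rw [min_eq_left hc]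
  · filter_upwards with n e
    rw [Real.norm_eq_abs, abs_of_nonneg (term_nonneg' ε h₀ h₁ n r e)]
    exact term_le ε h₀ h₁ n r e

noncomputable def FF (ε : ℝ) (k n r : ℕ) : ℝ :=
  if k ≤ r ∧ r ≤ n then
    (∑' e : ℕ, (min (r + e) n : ℝ) * ((r + e - 1).choose e : ℝ) * ε ^ e * (1 - ε) ^ r)
      * PM k n r
  else 0

noncomputable def GG (ε : ℝ) (k r : ℕ) : ℝ :=
  if k ≤ r then ((r:ℝ)/(1-ε)) * ((1/2:ℝ)^(r-k) * pinf (r-k)) else 0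

noncomputable def bnd (ε : ℝ) (k r : ℕ) : ℝ :=
  if k ≤ r then ((r:ℝ)/(1-ε)) * (1/2:ℝ)^(r-k) else 0

lemma bnd_nonneg (ε : ℝ) (h₁ : ε < 1) (k r : ℕ) : 0 ≤ bnd ε k r := by
  rw [bnd]
  split
  · have h1ε : (0:ℝ) < 1 - ε := by linarith
    positivity
  · exact le_refl _

lemma bnd_summable (ε : ℝ) (h₀ : 0 ≤ ε) (h₁ : ε < 1) (k : ℕ) : Summable (bnd ε k) := by
  have h1ε : (0:ℝ) < 1 - ε := by linarith
  have hg : Summable (fun r : ℕ => (r:ℝ) * (1/2:ℝ)^r) := by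
    have := summable_pow_mul_geometric_of_norm_lt_one (R := ℝ) 1
      (show ‖(1/2:ℝ)‖ < 1 by rw [Real.norm_eq_abs, abs_lt]; constructor <;> norm_num)
    simpa using this
  refine Summable.of_nonneg_of_le (fun r => bnd_nonneg ε h₁ k r) (fun r => ?_)
    (hg.mul_left ((2:ℝ)^k / (1-ε)))
  rw [bnd]
  split
  · rename_i hkr
    have hp : (1/2:ℝ)^(r-k) = (1/2:ℝ)^r / (1/2:ℝ)^k := pow_sub₀ _ (by norm_num) hkr
    have hk2 : ((1/2:ℝ)^k)⁻¹ = (2:ℝ)^k := by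
      rw [one_div, inv_pow, inv_inv]
    rw [hp]
    rw [div_eq_mul_inv ((1/2:ℝ)^r), hk2]
    apply le_of_eq
    ring
  · have : (0:ℝ) ≤ (r:ℝ) * (1/2:ℝ)^r := by positivity
    positivity

lemma FF_tendsto (ε : ℝ) (h₀ : 0 ≤ ε) (h₁ : ε < 1) (k : ℕ) (hk : 1 ≤ k) (r : ℕ) :
    Tendsto (fun n => FF ε k n r) atTop (nhds (GG ε k r)) := by
  by_cases hkr : k ≤ r
  · rw [GG, if_pos hkr]
    have ht := (inner_tendsto ε h₀ h₁ r (le_trans hk hkr)).mul (PM_tendsto hkr)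
    apply ht.congr'
    filter_upwards [eventually_ge_atTop r] with n hn
    rw [FF, if_pos ⟨hkr, hn⟩]
  · rw [GG, if_neg hkr]
    apply tendsto_const_nhds.congr
    intro n
    rw [FF, if_neg (fun h => hkr h.1)]

lemma FF_bound (ε : ℝ) (h₀ : 0 ≤ ε) (h₁ : ε < 1) (k : ℕ) (hk : 1 ≤ k) (n r : ℕ) :
    ‖FF ε k n r‖ ≤ bnd ε k r := by
  have h1ε : (0:ℝ) < 1 - ε := by linarith
  rw [FF]
  split
  · rename_i h
    have hnn : 0 ≤ (∑' e : ℕ, (min (r + e) n : ℝ) * ((r + e - 1).choose e : ℝ)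
        * ε ^ e * (1 - ε) ^ r) * PM k n r :=
      mul_nonneg (inner_nonneg ε h₀ h₁ n r) (PM_nonneg h.1 h.2)
    rw [Real.norm_eq_abs, abs_of_nonneg hnn, bnd, if_pos h.1]
    apply mul_le_mul (inner_le ε h₀ h₁ n r (le_trans hk h.1)) (PM_le h.1 h.2)
      (PM_nonneg h.1 h.2) (by positivity)
  · rw [norm_zero]
    exact bnd_nonneg ε h₁ k r

lemma GG_hasSum (ε : ℝ) (h₀ : 0 ≤ ε) (h₁ : ε < 1) (k : ℕ) :
    HasSum (GG ε k) (((k : ℝ) + c₀) / (1 - ε)) := by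
  have h1ε : (0:ℝ) < 1 - ε := by linarith
  have hc : c₀ = ∑' i : ℕ, 1/((2:ℝ)^(i+1) - 1) := rfl
  have hA := hasSumA.mul_left ((k:ℝ)/(1-ε))
  have hB := hasSumB.mul_left (1/(1-ε))
  have hsum := hA.add hB
  have heq : (fun t : ℕ => (k:ℝ)/(1-ε) * ((1/2:ℝ)^t * pinf t)
      + 1/(1-ε) * ((t:ℝ) * ((1/2:ℝ)^t * pinf t))) = fun t => GG ε k (t + k) := by
    funext t
    rw [GG, if_pos (Nat.le_add_left k t), Nat.add_sub_cancel]
    push_cast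
    ring
  rw [heq] at hsum
  have hval : (k:ℝ)/(1-ε) * 1 + 1/(1-ε) * (∑' i : ℕ, 1/((2:ℝ)^(i+1) - 1))
      = ((k : ℝ) + c₀) / (1 - ε) := by
    rw [← hc]
    field_simp
  rw [hval] at hsum
  have := (hasSum_nat_add_iff (f := GG ε k) k).1 hsum
  have hz : ∑ i ∈ Finset.range k, GG ε k i = 0 := by
    apply Finset.sum_eq_zero
    intro i hi
    rw [Finset.mem_range] at hi
    rw [GG, if_neg (by omega)]
  rw [hz, add_zero] at this
  exact this

/-- `lim_{n→∞} E[N_n] = (k + c₀)/(1 − ε)`, where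
`E[N_n] = ∑_{r=k}^{n} ∑_{e=0}^{∞} min(r+e, n) · C(r+e−1, e) ε^e (1−ε)^r · P_{M_n}(r)`
is the expected length of a transmission round over a memoryless erasure channel with
erasure probability `ε`. -/
theorem mean_round_length_limit (k : ℕ) (hk : 1 ≤ k) (ε : ℝ) (h₀ : 0 ≤ ε) (h₁ : ε < 1) :
    Tendsto
      (fun n : ℕ => ∑ r ∈ Finset.Icc k n, ∑' e : ℕ,
        (min (r + e) n : ℝ) * (Nat.choose (r + e - 1) e : ℝ) * ε ^ e * (1 - ε) ^ r *
          PM k n r)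
      atTop (nhds (((k : ℝ) + c₀) / (1 - ε))) := by
  classical
  have hmain : Tendsto (fun n => ∑' r, FF ε k n r) atTop (nhds (∑' r, GG ε k r)) :=
    tendsto_tsum_of_dominated_convergence (bnd_summable ε h₀ h₁ k)
      (FF_tendsto ε h₀ h₁ k hk) (Filter.Eventually.of_forall (fun n r => FF_bound ε h₀ h₁ k hk n r))
  rw [(GG_hasSum ε h₀ h₁ k).tsum_eq] at hmain
  apply hmain.congr
  intro n
  rw [tsum_eq_sum (s := Finset.Icc k n) ?_]
  · apply Finset.sum_congr rfl
    intro r hr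
    rw [Finset.mem_Icc] at hr
    rw [FF, if_pos hr, ← tsum_mul_right]
  · intro r hr
    rw [Finset.mem_Icc] at hr
    rw [FF, if_neg hr]
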